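/- arXiv:1107.0062 — 2 statements merged into one kernel-verified Lean document; each statement's English description precedes it below -/
import Mathlib

section
/- Let (a_k) be a sequence defined by a prefix of length p followed by infinite repetitions of a suffix block of positive length s, i.e., a_{k+s} = a_k for all k ≥ p. If T(k) denotes the k-th time a distinguished proposition π is satisfied along (a_k), and π is satisfied at least once in the suffix block, then limsup_{i→∞} (T(i+1) − T(i)) equals the maximum gap between consecutive satisfactions of π within one period (computed over the eventually periodic part). -/
/-- For a run `a` in prefix–suffix form (prefix of length `p`, suffix of period `s > 0`),
with positive travel weights `w` generating times `t`, and a proposition `π` satisfied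
somewhere in the suffix block, the limsup of gaps between consecutive satisfaction times `T`
of `π` equals the supremum (maximum) of the gaps within one period of the periodic part. -/
theorem stmt4 {S : Type*} (a : ℕ → S) (p s : ℕ) (hs : 0 < s)
    (hper : ∀ k, p ≤ k → a (k + s) = a k)
    (w : S → S → ℝ) (hw : ∀ x y, 0 < w x y)
    (t : ℕ → ℝ) (ht0 : t 0 = 0) (ht : ∀ k, t (k + 1) = t k + w (a k) (a (k + 1)))
    (π : S → Prop) (hπ : ∃ k, p ≤ k ∧ k < p + s ∧ π (a k))
    (T : ℕ → ℝ) (hT : ∀ i, T i = t (Nat.nth (fun k => π (a k)) i)) :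
    ∃ N n : ℕ, 0 < n ∧ (∀ i, N ≤ i → T (i + n) = T i + (t (p + s) - t p)) ∧
      Filter.limsup (fun i => T (i + 1) - T i) Filter.atTop =
        sSup ((fun i => T (i + 1) - T i) '' Set.Ico N (N + n)) := by
  classical
  set Q : ℕ → Prop := fun k => π (a k) with hQdef
  have hQper : ∀ k, p ≤ k → (Q (k + s) ↔ Q k) := by
    intro k hk
    simp only [hQdef, hper k hk]
  obtain ⟨k0, hk0p, hk0ps, hk0π⟩ := hπ
  have hprog : ∀ m, Q (k0 + m * s) := by
    intro m
    induction m with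
    | zero => simpa using hk0π
    | succ m ih =>
      have hle : p ≤ k0 + m * s := le_trans hk0p (Nat.le_add_right _ _)
      have := (hQper _ hle).2 ih
      have heq : k0 + (m + 1) * s = k0 + m * s + s := by ring
      rwa [heq]
  have hinf : (setOf Q).Infinite := by
    refine Set.infinite_of_injective_forall_mem (f := fun m : ℕ => k0 + m * s)
      (fun m m' h => ?_) hprog
    simp only at h
    exact Nat.eq_of_mul_eq_mul_right hs (Nat.add_left_cancel h)
  set N := Nat.count Q p with hN
  set n := Nat.count Q (p + s) - N with hn
  -- count is s-periodic-increment beyond p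
  have hcount : ∀ k, p ≤ k → Nat.count Q (k + s) = Nat.count Q k + n := by
    intro k hk
    induction k, hk using Nat.le_induction with
    | base =>
      have hmono : Nat.count Q p ≤ Nat.count Q (p + s) :=
        Nat.count_monotone Q (Nat.le_add_right p s)
      rw [hn, hN]
      omega
    | succ k hk ih =>
      have h1 : k + 1 + s = (k + s) + 1 := by ring
      rw [h1, Nat.count_succ, Nat.count_succ, ih]
      by_cases hq : Q k
      · rw [if_pos ((hQper k hk).2 hq), if_pos hq]; ring
      · rw [if_neg (fun h => hq ((hQper k hk).1 h)), if_neg hq]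
        omega
  have hnpos : 0 < n := by
    have h1 : Nat.count Q (k0 + 1) = Nat.count Q k0 + 1 := by
      rw [Nat.count_succ, if_pos hk0π]
    have h2 : Nat.count Q (k0 + 1) ≤ Nat.count Q (p + s) := Nat.count_monotone Q hk0ps
    have h3 : Nat.count Q p ≤ Nat.count Q k0 := Nat.count_monotone Q hk0p
    omega
  -- nth beyond N is ≥ p
  have hnth_ge : ∀ i, N ≤ i → p ≤ Nat.nth Q i := by
    intro i hi
    by_contra h
    push_neg at h
    have hq : Q (Nat.nth Q i) := Nat.nth_mem_of_infinite hinf i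
    have h1 : Nat.count Q (Nat.nth Q i + 1) = Nat.count Q (Nat.nth Q i) + 1 := by
      rw [Nat.count_succ, if_pos hq]
    have h2 : Nat.count Q (Nat.nth Q i + 1) ≤ Nat.count Q p := Nat.count_monotone Q h
    have h3 : Nat.count Q (Nat.nth Q i) = i := Nat.count_nth_of_infinite hinf i
    omega
  have hnth : ∀ i, N ≤ i → Nat.nth Q (i + n) = Nat.nth Q i + s := by
    intro i hi
    set k := Nat.nth Q i with hk
    have hkp : p ≤ k := hnth_ge i hi
    have hqk : Q k := Nat.nth_mem_of_infinite hinf i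
    have hqks : Q (k + s) := (hQper k hkp).2 hqk
    have hc : Nat.count Q (k + s) = i + n := by
      rw [hcount k hkp, hk, Nat.count_nth_of_infinite hinf i]
    calc Nat.nth Q (i + n) = Nat.nth Q (Nat.count Q (k + s)) := by rw [hc]
      _ = k + s := Nat.nth_count hqks
  -- t periodicity
  set P : ℝ := t (p + s) - t p with hP
  have htper : ∀ k, p ≤ k → t (k + s) = t k + P := by
    intro k hk
    induction k, hk using Nat.le_induction with
    | base => rw [hP]; ring
    | succ k hk ih =>
      have h1 : k + 1 + s = (k + s) + 1 := by ring
      rw [h1, ht (k + s), hper k hk, show k + s + 1 = (k+1) + s by ring,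
        hper (k+1) (by omega), ih, ht k]
      ring
  -- T periodicity
  have hTper : ∀ i, N ≤ i → T (i + n) = T i + P := by
    intro i hi
    rw [hT, hT, hnth i hi, htper _ (hnth_ge i hi)]
  refine ⟨N, n, hnpos, hTper, ?_⟩
  -- gaps
  set g : ℕ → ℝ := fun i => T (i + 1) - T i with hg
  have hgper : ∀ i, N ≤ i → g (i + n) = g i := by
    intro i hi
    have h1 := hTper i hi
    have h2 := hTper (i + 1) (by omega)
    simp only [hg]
    rw [show i + n + 1 = (i + 1) + n by ring, h2, h1]
    ring
  have hgiter : ∀ m i, N ≤ i → g (i + m * n) = g i := by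
    intro m
    induction m with
    | zero => simp
    | succ m ih =>
      intro i hi
      rw [show i + (m + 1) * n = (i + m * n) + n by ring,
        hgper _ (by omega), ih i hi]
  have hgred : ∀ i, N ≤ i → g i = g (N + (i - N) % n) := by
    intro i hi
    have h2 := hgiter ((i - N) / n) (N + (i - N) % n) (Nat.le_add_right _ _)
    have h1 : N + (i - N) % n + (i - N) / n * n = i := by
      have h3 := Nat.div_add_mod (i - N) n
      have h4 : (i - N) / n * n = n * ((i - N) / n) := Nat.mul_comm _ _
      omega
    rw [h1] at h2
    exact h2
  set Sg : Set ℝ := g '' Set.Ico N (N + n) with hSg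
  have hSfin : Sg.Finite := (Set.finite_Ico _ _).image _
  have hSne : Sg.Nonempty := ⟨g N, ⟨N, ⟨le_refl N, by omega⟩, rfl⟩⟩
  set M : ℝ := sSup Sg with hM
  have hMmem : M ∈ Sg := hSne.csSup_mem hSfin
  obtain ⟨i0, hi0, hgi0⟩ := hMmem
  have hub : ∀ᶠ i in Filter.atTop, g i ≤ M := by
    filter_upwards [Filter.eventually_ge_atTop N] with i hi
    rw [hgred i hi]
    exact le_csSup hSfin.bddAbove ⟨N + (i - N) % n, ⟨by omega, by
      have := Nat.mod_lt (i - N) hnpos; omega⟩, rfl⟩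
  have hfreq : ∃ᶠ i in Filter.atTop, M ≤ g i := by
    rw [Filter.frequently_atTop]
    intro j
    refine ⟨i0 + j * n, by nlinarith [hi0.1, hnpos], ?_⟩
    rw [hgiter j i0 hi0.1, hgi0]
  refine le_antisymm ?_ ?_
  · exact Filter.limsup_le_of_le (Filter.IsCoboundedUnder.of_frequently_ge hfreq) hub
  · exact Filter.le_limsup_of_frequently_le hfreq
      (Filter.isBoundedUnder_of_eventually_le hub)
end

section
/- If a sequence of times T: ℕ → ℝ is strictly increasing, unbounded, and eventually periodic with period time P > 0 and n ≥ 1 satisfactions per period (i.e., there exist N and n such that T(i+n) = T(i) + P for all i ≥ N), then limsup_{i→∞}(T(i+1) − T(i)) = max_{N ≤ i < N+n} (T(i+1) − T(i)), and this limsup is finite. -/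
/-- If `T : ℕ → ℝ` is strictly increasing, unbounded and eventually periodic (with `n ≥ 1`
satisfactions per period and period time `P > 0`), then
`limsup (T (i+1) - T i) = max_{N ≤ i < N + n} (T (i+1) - T i)`, and the gaps are bounded. -/
theorem stmt5 (T : ℕ → ℝ) (hmono : StrictMono T) (hub : ∀ M : ℝ, ∃ i, M < T i)
    (N n : ℕ) (hn : 1 ≤ n) (P : ℝ) (hP : 0 < P)
    (hper : ∀ i, N ≤ i → T (i + n) = T i + P) :
    Filter.limsup (fun i => T (i + 1) - T i) Filter.atTop =
      (Finset.Ico N (N + n)).sup' (by rw [Finset.nonempty_Ico]; omega)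
        (fun i => T (i + 1) - T i) ∧
    BddAbove (Set.range fun i => T (i + 1) - T i) := by
  set g : ℕ → ℝ := fun i => T (i + 1) - T i with hg
  have hne : (Finset.Ico N (N + n)).Nonempty := by rw [Finset.nonempty_Ico]; omega
  set M := (Finset.Ico N (N + n)).sup' hne g with hM
  have hgper : ∀ i, N ≤ i → g (i + n) = g i := by
    intro i hi
    have h1 := hper i hi
    have h2 := hper (i + 1) (by omega)
    have h3 : i + 1 + n = i + n + 1 := by omega
    rw [h3] at h2
    simp only [hg, h1, h2]
    ring
  have key : ∀ k i, N ≤ i → g (i + k * n) = g i := by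
    intro k
    induction k with
    | zero => simp
    | succ k ih =>
      intro i hi
      have h4 : i + (k + 1) * n = i + k * n + n := by ring
      rw [h4, hgper _ (by omega), ih i hi]
  have hrep : ∀ i, N ≤ i → ∃ j ∈ Finset.Ico N (N + n), g i = g j := by
    intro i hi
    refine ⟨N + (i - N) % n, ?_, ?_⟩
    · rw [Finset.mem_Ico]
      have := Nat.mod_lt (i - N) (show 0 < n by omega)
      omega
    · have h5 : i = (N + (i - N) % n) + ((i - N) / n) * n := by
        have := Nat.mod_add_div' (i - N) n
        omega
      have h6 := key ((i - N) / n) (N + (i - N) % n) (by omega)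
      rw [← h5] at h6
      exact h6
  have hle : ∀ i, N ≤ i → g i ≤ M := by
    intro i hi
    obtain ⟨j, hj, hgj⟩ := hrep i hi
    rw [hgj]; exact Finset.le_sup' g hj
  obtain ⟨j0, hj0, hj0M⟩ := Finset.exists_mem_eq_sup' hne g
  have hj0N : N ≤ j0 := (Finset.mem_Ico.1 hj0).1
  have hfreq : ∃ᶠ i in Filter.atTop, M ≤ g i := by
    rw [Filter.frequently_atTop]
    intro a
    refine ⟨j0 + a * n, ?_, ?_⟩
    · have : a ≤ a * n := Nat.le_mul_of_pos_right a (by omega)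
      omega
    · rw [key a j0 hj0N, ← hj0M]
  have hbdd : Filter.IsBoundedUnder (· ≤ ·) Filter.atTop g :=
    ⟨M, Filter.eventually_map.2 (Filter.eventually_atTop.2 ⟨N, hle⟩)⟩
  have hcobdd : Filter.IsCoboundedUnder (· ≤ ·) Filter.atTop g :=
    Filter.IsCoboundedUnder.of_frequently_ge hfreq
  constructor
  · refine le_antisymm ?_ ?_
    · exact Filter.limsup_le_of_le hcobdd (Filter.eventually_atTop.2 ⟨N, hle⟩)
    · exact Filter.le_limsup_of_frequently_le hfreq hbdd
  · set C := (Finset.range (N + 1)).sup' ⟨0, Finset.mem_range.2 (by omega)⟩ g with hC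
    refine ⟨max M C, ?_⟩
    rintro x ⟨i, rfl⟩
    rcases le_or_gt N i with hi | hi
    · exact le_max_of_le_left (hle i hi)
    · exact le_max_of_le_right (Finset.le_sup' g (Finset.mem_range.2 (by omega)))
end
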